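/- Over any universe U, the LRU (least-recently used) paging algorithm is stable: for every sequence τ, every X ⊆ U, every z ∈ X, and all cache sizes a > b, if Out(LRU_b, τ[X], z) ∩ LRU_a(τz) ≠ ∅ then LRU_b(τ[X]z) ⊆ LRU_a(τz). -/

import Mathlib

open scoped Classical

namespace SetAssoc

variable {U : Type*} [DecidableEq U]

/-- `τ[X]`: the subsequence of `τ` consisting of the requests to items of `X`. -/
noncomputable def restrict (τ : List U) (X : Set U) : List U :=
  τ.filter (fun a => decide (a ∈ X))

/-- The set of items evicted by `A_k` in response to a request `z` after serving `τ`. -/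
def Out (A : ℕ → List U → Finset U) (k : ℕ) (τ : List U) (z : U) : Finset U :=
  A k τ \ A k (τ ++ [z])

/-- The LRU cache of size `k` after serving `σ`: the set of the at most `k` most
recently requested distinct items of `σ`. -/
def LRU (k : ℕ) (σ : List U) : Finset U :=
  (σ.reverse.dedup.take k).toFinset

lemma filter_dedup (p : U → Bool) : ∀ l : List U, (l.filter p).dedup = l.dedup.filter p := by
  intro l
  induction l with
  | nil => simp
  | cons a l ih =>
    by_cases hp : p a
    · rw [List.filter_cons_of_pos hp]
      by_cases ha : a ∈ l
      · rw [List.dedup_cons_of_mem (by simp [List.mem_filter, ha, hp]),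
          List.dedup_cons_of_mem ha, ih]
      · rw [List.dedup_cons_of_notMem (by simp [List.mem_filter, ha]),
          List.dedup_cons_of_notMem ha, ih, List.filter_cons_of_pos hp]
    · rw [List.filter_cons_of_neg hp]
      by_cases ha : a ∈ l
      · rw [List.dedup_cons_of_mem ha, ih]
      · rw [List.dedup_cons_of_notMem ha, ih, List.filter_cons_of_neg hp]

omit [DecidableEq U] in
lemma take_filter_subset_take (p : U → Bool) :
    ∀ (L : List U) (b m : ℕ) (w : U),
      w ∈ (L.filter p).take b → w ∉ (L.filter p).take (b - 1) →
      w ∈ L.take m → ∀ x ∈ (L.filter p).take b, x ∈ L.take m := by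
  intro L
  induction L with
  | nil => simp
  | cons y L ih =>
    intro b m w hw1 hw2 hwm x hx
    match b, m with
    | 0, _ => simp at hw1
    | b + 1, 0 => simp at hwm
    | b + 1, m + 1 =>
      rw [List.take_succ_cons] at hwm ⊢
      by_cases hp : p y
      · rw [List.filter_cons_of_pos hp, List.take_succ_cons] at hw1 hx
        rw [List.filter_cons_of_pos hp, Nat.add_sub_cancel] at hw2
        rcases List.mem_cons.mp hx with rfl | hx
        · exact List.mem_cons_self
        · match b with
          | 0 => simp at hx
          | b + 1 =>
            rw [List.take_succ_cons] at hw2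
            have hwy : w ≠ y := fun h => hw2 (h ▸ List.mem_cons_self)
            have hw2' : w ∉ (L.filter p).take (b + 1 - 1) := by
              rw [Nat.add_sub_cancel]
              exact fun h => hw2 (List.mem_cons_of_mem _ h)
            have hw1' : w ∈ (L.filter p).take (b + 1) :=
              (List.mem_cons.mp hw1).resolve_left hwy
            have hwm' : w ∈ L.take m := (List.mem_cons.mp hwm).resolve_left hwy
            exact List.mem_cons_of_mem _ (ih (b + 1) m w hw1' hw2' hwm' x hx)
      · rw [List.filter_cons_of_neg hp] at hw1 hw2 hx
        have hpw : p w := by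
          have := List.mem_filter.mp (List.take_subset _ _ hw1)
          exact this.2
        have hwy : w ≠ y := fun h => hp (h ▸ hpw)
        have hwm' : w ∈ L.take m := (List.mem_cons.mp hwm).resolve_left hwy
        exact List.mem_cons_of_mem _ (ih (b + 1) m w hw1 hw2 hwm' x hx)

/-- **LRU is stable.** -/
theorem lru_isStable :
    ∀ (τ : List U) (X : Set U) (z : U), z ∈ X →
      ∀ a b : ℕ, b < a →
        (Out (LRU (U := U)) b (restrict τ X) z ∩ LRU a (τ ++ [z])).Nonempty →
        LRU b (restrict τ X ++ [z]) ⊆ LRU a (τ ++ [z]) := by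
  intro τ X z hzX a b hba hne
  set p : U → Bool := fun a => decide (a ∈ X) with hp
  by_cases hz : z ∈ restrict τ X
  · -- then appending z does not change the cache, so Out is empty: contradiction
    exfalso
    obtain ⟨w, hw⟩ := hne
    have h1 : (restrict τ X ++ [z]).reverse.dedup = (restrict τ X).reverse.dedup := by
      rw [List.reverse_append, List.reverse_singleton, List.singleton_append,
        List.dedup_cons_of_mem (List.mem_reverse.mpr hz)]
    have heq : LRU b (restrict τ X ++ [z]) = LRU b (restrict τ X) := by
      rw [LRU, LRU, h1]
    have : Out (LRU (U := U)) b (restrict τ X) z = ∅ := by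
      rw [Out, heq, Finset.sdiff_self]
    rw [this] at hw
    simp at hw
  · have hzτ : z ∉ τ := fun h => hz (by simp [restrict, List.mem_filter, h, hzX])
    set L := τ.reverse.dedup with hL
    have hF : (restrict τ X).reverse.dedup = L.filter p := by
      rw [restrict, ← List.filter_reverse, filter_dedup]
    set F := L.filter p with hFdef
    have hzσr : z ∉ (restrict τ X).reverse := by
      rw [List.mem_reverse]; exact hz
    have hzτr : z ∉ τ.reverse := by
      rw [List.mem_reverse]; exact hzτ
    have hσz : (restrict τ X ++ [z]).reverse.dedup = z :: F := by
      rw [List.reverse_append, List.reverse_singleton, List.singleton_append,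
        List.dedup_cons_of_notMem hzσr, hF]
    have hτz : (τ ++ [z]).reverse.dedup = z :: L := by
      rw [List.reverse_append, List.reverse_singleton, List.singleton_append,
        List.dedup_cons_of_notMem hzτr, hL]
    obtain ⟨w, hw⟩ := hne
    rw [Finset.mem_inter, Out, Finset.mem_sdiff] at hw
    obtain ⟨⟨hw1, hw2⟩, hw3⟩ := hw
    rw [LRU, hF, List.mem_toFinset] at hw1
    rw [LRU, hσz, List.mem_toFinset] at hw2
    rw [LRU, hτz, List.mem_toFinset] at hw3
    match a, b with
    | a + 1, 0 => simp at hw1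
    | a + 1, b + 1 =>
      rw [List.take_succ_cons] at hw2 hw3
      have hwz : w ≠ z := fun h => hw2 (h ▸ List.mem_cons_self)
      have hw2' : w ∉ F.take b := fun h => hw2 (List.mem_cons_of_mem _ h)
      have hw3' : w ∈ L.take a := (List.mem_cons.mp hw3).resolve_left hwz
      have key : ∀ x ∈ F.take (b + 1), x ∈ L.take a := by
        have := take_filter_subset_take p L (b + 1) a w hw1
        rw [Nat.add_sub_cancel] at this
        exact this hw2' hw3'
      intro x hx
      rw [LRU, hσz, List.mem_toFinset, List.take_succ_cons] at hx
      rw [LRU, hτz, List.mem_toFinset, List.take_succ_cons]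
      rcases List.mem_cons.mp hx with rfl | hx
      · exact List.mem_cons_self
      · have hx' : x ∈ F.take (b + 1) := by
          have : F.take b = (F.take (b + 1)).take b := by
            rw [List.take_take, min_eq_left (Nat.le_succ b)]
          exact List.take_subset _ _ (this ▸ hx)
        exact List.mem_cons_of_mem _ (key x hx')

end SetAssoc
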